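/- Let R = R₁ × R₂ be a product of G-graded rings and M = M₁ × M₂. If N₁ is a graded R₁-submodule of M₁ with Ann_{R₁}(N₁) a graded primary ideal of R₁, and N₂ is a graded R₂-submodule of M₂ with Ann_{R₂}(N₂) a graded primary ideal of R₂, then Ann_R(N₁ × N₂) is a graded 2-absorbing primary ideal of R. -/

import Mathlib

open DirectSum Pointwise

variable {G : Type} [AddGroup G] [DecidableEq G]
variable {R : Type} [CommRing R] (𝒜 : G → AddSubgroup R) [GradedRing 𝒜]
variable {M : Type} [AddCommGroup M] [Module R M] (ℳ : G → AddSubgroup M)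
  [SetLike.GradedSMul 𝒜 ℳ] [DirectSum.Decomposition ℳ]

/-- A submodule is graded if it contains every homogeneous component of each of
its elements. -/
def IsGradedSubmodule (N : Submodule R M) : Prop :=
  ∀ (g : G) (m : M), m ∈ N → (DirectSum.decompose ℳ m g : M) ∈ N

/-- The graded radical of an ideal: all `r` such that for each `g` some positive
power of the degree-`g` component of `r` lies in `P`. -/
def gradRad (P : Ideal R) : Set R :=
  {r : R | ∀ g : G, ∃ n : ℕ, 0 < n ∧ ((DirectSum.decompose 𝒜 r g : R)) ^ n ∈ P}

/-- Graded 2-absorbing coprimary submodule. -/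
def IsGr2AbsCoprimary (N : Submodule R M) : Prop :=
  N ≠ ⊥ ∧ IsGradedSubmodule ℳ N ∧
  ∀ x y : R, (∃ g, x ∈ 𝒜 g) → (∃ g, y ∈ 𝒜 g) →
    ∀ K : Submodule R M, IsGradedSubmodule ℳ K →
      (∀ m ∈ N, (x * y) • m ∈ K) →
      x ∈ gradRad 𝒜 (K.colon N) ∨ y ∈ gradRad 𝒜 (K.colon N) ∨ x * y ∈ N.annihilator

/-- Graded 2-absorbing primary ideal. -/
def IsGr2AbsPrimaryIdeal (P : Ideal R) : Prop :=
  P ≠ ⊤ ∧ (∀ (g : G) (r : R), r ∈ P → (DirectSum.decompose 𝒜 r g : R) ∈ P) ∧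
  ∀ a b c : R, (∃ g, a ∈ 𝒜 g) → (∃ g, b ∈ 𝒜 g) → (∃ g, c ∈ 𝒜 g) →
    a * b * c ∈ P → a * b ∈ P ∨ a * c ∈ gradRad 𝒜 P ∨ b * c ∈ gradRad 𝒜 P

/-- Graded primary ideal. -/
def IsGrPrimaryIdeal (P : Ideal R) : Prop :=
  P ≠ ⊤ ∧ (∀ (g : G) (r : R), r ∈ P → (DirectSum.decompose 𝒜 r g : R) ∈ P) ∧
  ∀ a b : R, (∃ g, a ∈ 𝒜 g) → (∃ g, b ∈ 𝒜 g) →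
    a * b ∈ P → a ∈ P ∨ b ∈ gradRad 𝒜 P

variable {R₁ R₂ : Type} [CommRing R₁] [CommRing R₂]
  (𝒜₁ : G → AddSubgroup R₁) [GradedRing 𝒜₁]
  (𝒜₂ : G → AddSubgroup R₂) [GradedRing 𝒜₂]
  {M₁ M₂ : Type} [AddCommGroup M₁] [AddCommGroup M₂]
  [Module R₁ M₁] [Module R₂ M₂]
  (ℳ₁ : G → AddSubgroup M₁) [SetLike.GradedSMul 𝒜₁ ℳ₁] [DirectSum.Decomposition ℳ₁]
  (ℳ₂ : G → AddSubgroup M₂) [SetLike.GradedSMul 𝒜₂ ℳ₂] [DirectSum.Decomposition ℳ₂]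
  [GradedRing (fun g => (𝒜₁ g).prod (𝒜₂ g))]
  [Module (R₁ × R₂) (M₁ × M₂)]
  [SetLike.GradedSMul (fun g => (𝒜₁ g).prod (𝒜₂ g)) (fun g => (ℳ₁ g).prod (ℳ₂ g))]
  [DirectSum.Decomposition (fun g => (ℳ₁ g).prod (ℳ₂ g))]

section Aux

lemma hom_pow_mem_gradRad {P : Ideal R} {x : R} {g : G} {n : ℕ}
    (hx : x ∈ 𝒜 g) (hn : 0 < n) (h : x ^ n ∈ P) : x ∈ gradRad 𝒜 P := by
  intro g'
  refine ⟨n, hn, ?_⟩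
  by_cases hgg : g = g'
  · subst hgg
    rwa [DirectSum.decompose_of_mem_same 𝒜 hx]
  · rw [DirectSum.decompose_of_mem_ne 𝒜 hx hgg, zero_pow hn.ne']
    exact P.zero_mem

lemma hom_mem_gradRad_elim {P : Ideal R} {x : R} {g : G}
    (hx : x ∈ 𝒜 g) (h : x ∈ gradRad 𝒜 P) : ∃ n : ℕ, 0 < n ∧ x ^ n ∈ P := by
  obtain ⟨n, hn, hmem⟩ := h g
  rw [DirectSum.decompose_of_mem_same 𝒜 hx] at hmem
  exact ⟨n, hn, hmem⟩

lemma hom_mul_mem_gradRad {P : Ideal R} {x y : R} {gx gy : G}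
    (hx : x ∈ 𝒜 gx) (hy : y ∈ 𝒜 gy) (h : x ∈ gradRad 𝒜 P) :
    x * y ∈ gradRad 𝒜 P := by
  obtain ⟨n, hn, hmem⟩ := hom_mem_gradRad_elim 𝒜 hx h
  refine hom_pow_mem_gradRad 𝒜 (SetLike.mul_mem_graded hx hy) hn ?_
  rw [mul_pow]
  exact P.mul_mem_right _ hmem

end Aux

section Prod

lemma decompose_prod_eq (r : R₁ × R₂) (g : G) :
    ((DirectSum.decompose (fun g => (𝒜₁ g).prod (𝒜₂ g)) r g : R₁ × R₂)) =
      ((DirectSum.decompose 𝒜₁ r.1 g : R₁), (DirectSum.decompose 𝒜₂ r.2 g : R₂)) := by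
  induction r using DirectSum.Decomposition.inductionOn (fun g => (𝒜₁ g).prod (𝒜₂ g)) with
  | zero => simp; rfl
  | homogeneous m =>
    rename_i i
    have h1 : (m : R₁ × R₂).1 ∈ 𝒜₁ i := m.2.1
    have h2 : (m : R₁ × R₂).2 ∈ 𝒜₂ i := m.2.2
    by_cases hig : i = g
    · subst hig
      rw [DirectSum.decompose_of_mem_same (fun g => (𝒜₁ g).prod (𝒜₂ g)) m.2,
        DirectSum.decompose_of_mem_same 𝒜₁ h1, DirectSum.decompose_of_mem_same 𝒜₂ h2]
    · rw [DirectSum.decompose_of_mem_ne (fun g => (𝒜₁ g).prod (𝒜₂ g)) m.2 hig,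
        DirectSum.decompose_of_mem_ne 𝒜₁ h1 hig, DirectSum.decompose_of_mem_ne 𝒜₂ h2 hig]
      rfl
  | add x y hx hy =>
    rw [DirectSum.decompose_add, DirectSum.add_apply, AddSubgroup.coe_add, hx, hy,
      Prod.fst_add, Prod.snd_add, DirectSum.decompose_add, DirectSum.decompose_add,
      DirectSum.add_apply, DirectSum.add_apply, AddSubgroup.coe_add, AddSubgroup.coe_add,
      Prod.mk_add_mk]

lemma mem_ann_prod_iff
    (hsmul : ∀ (r : R₁ × R₂) (m : M₁ × M₂), r • m = (r.1 • m.1, r.2 • m.2))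
    (N₁ : Submodule R₁ M₁) (N₂ : Submodule R₂ M₂)
    (N : Submodule (R₁ × R₂) (M₁ × M₂))
    (hNset : (N : Set (M₁ × M₂)) = (N₁ : Set M₁) ×ˢ (N₂ : Set M₂)) (r : R₁ × R₂) :
    r ∈ N.annihilator ↔ r.1 ∈ N₁.annihilator ∧ r.2 ∈ N₂.annihilator := by
  have hmemN : ∀ m : M₁ × M₂, m ∈ N ↔ m.1 ∈ N₁ ∧ m.2 ∈ N₂ := by
    intro m
    rw [← SetLike.mem_coe, hNset, Set.mem_prod]
    rfl
  simp only [Submodule.mem_annihilator]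
  constructor
  · intro h
    constructor
    · intro m₁ hm₁
      have := h (m₁, 0) ((hmemN _).2 ⟨hm₁, N₂.zero_mem⟩)
      rw [hsmul] at this
      exact congrArg Prod.fst this
    · intro m₂ hm₂
      have := h (0, m₂) ((hmemN _).2 ⟨N₁.zero_mem, hm₂⟩)
      rw [hsmul] at this
      exact congrArg Prod.snd this
  · rintro ⟨h1, h2⟩ m hm
    rw [hsmul, h1 m.1 ((hmemN m).1 hm).1, h2 m.2 ((hmemN m).1 hm).2]
    rfl

lemma gradRad_prod_mem {P : Ideal (R₁ × R₂)} {P₁ : Ideal R₁} {P₂ : Ideal R₂}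
    (hmem : ∀ r : R₁ × R₂, r ∈ P ↔ r.1 ∈ P₁ ∧ r.2 ∈ P₂) {r : R₁ × R₂}
    (h1 : r.1 ∈ gradRad 𝒜₁ P₁) (h2 : r.2 ∈ gradRad 𝒜₂ P₂) :
    r ∈ gradRad (fun g => (𝒜₁ g).prod (𝒜₂ g)) P := by
  intro g
  obtain ⟨n₁, hn₁, hp₁⟩ := h1 g
  obtain ⟨n₂, hn₂, hp₂⟩ := h2 g
  refine ⟨n₁ + n₂, by omega, ?_⟩
  rw [decompose_prod_eq]
  rw [hmem]
  constructor
  · show (DirectSum.decompose 𝒜₁ r.1 g : R₁) ^ (n₁ + n₂) ∈ P₁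
    rw [pow_add]
    exact P₁.mul_mem_right _ hp₁
  · show (DirectSum.decompose 𝒜₂ r.2 g : R₂) ^ (n₁ + n₂) ∈ P₂
    rw [add_comm, pow_add]
    exact P₂.mul_mem_right _ hp₂

end Prod

theorem stmt_13
    (hsmul : ∀ (r : R₁ × R₂) (m : M₁ × M₂), r • m = (r.1 • m.1, r.2 • m.2))
    (N₁ : Submodule R₁ M₁) (hN₁ : IsGradedSubmodule ℳ₁ N₁)
    (hP₁ : IsGrPrimaryIdeal 𝒜₁ N₁.annihilator)
    (N₂ : Submodule R₂ M₂) (hN₂ : IsGradedSubmodule ℳ₂ N₂)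
    (hP₂ : IsGrPrimaryIdeal 𝒜₂ N₂.annihilator)
    (N : Submodule (R₁ × R₂) (M₁ × M₂))
    (hNset : (N : Set (M₁ × M₂)) = (N₁ : Set M₁) ×ˢ (N₂ : Set M₂)) :
    IsGr2AbsPrimaryIdeal (fun g => (𝒜₁ g).prod (𝒜₂ g)) N.annihilator := by
  have hmem := mem_ann_prod_iff hsmul N₁ N₂ N hNset
  refine ⟨?_, ?_, ?_⟩
  · intro h
    exact hP₁.1 ((Ideal.eq_top_iff_one _).2 ((hmem 1).1 (h ▸ Submodule.mem_top)).1)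
  · intro g r hr
    rw [decompose_prod_eq, hmem]
    exact ⟨hP₁.2.1 g r.1 ((hmem r).1 hr).1, hP₂.2.1 g r.2 ((hmem r).1 hr).2⟩
  · rintro a b c ⟨ga, ha⟩ ⟨gb, hb⟩ ⟨gc, hc⟩ habc
    have ha1 : a.1 ∈ 𝒜₁ ga := ha.1
    have ha2 : a.2 ∈ 𝒜₂ ga := ha.2
    have hb1 : b.1 ∈ 𝒜₁ gb := hb.1
    have hb2 : b.2 ∈ 𝒜₂ gb := hb.2
    have hc1 : c.1 ∈ 𝒜₁ gc := hc.1
    have hc2 : c.2 ∈ 𝒜₂ gc := hc.2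
    have h1 : a.1 * b.1 * c.1 ∈ N₁.annihilator := ((hmem _).1 habc).1
    have h2 : a.2 * b.2 * c.2 ∈ N₂.annihilator := ((hmem _).1 habc).2
    have d1 := hP₁.2.2 (a.1 * b.1) c.1 ⟨ga + gb, SetLike.mul_mem_graded ha1 hb1⟩ ⟨gc, hc1⟩ h1
    have d2 := hP₂.2.2 (a.2 * b.2) c.2 ⟨ga + gb, SetLike.mul_mem_graded ha2 hb2⟩ ⟨gc, hc2⟩ h2
    rcases d1 with d1 | d1 <;> rcases d2 with d2 | d2
    · exact Or.inl ((hmem _).2 ⟨d1, d2⟩)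
    · -- a.1*b.1 ∈ P₁, c.2 ∈ gradRad P₂
      have e1 := hP₁.2.2 a.1 (b.1 * c.1) ⟨ga, ha1⟩ ⟨gb + gc, SetLike.mul_mem_graded hb1 hc1⟩
        (by rwa [← mul_assoc])
      rcases e1 with e1 | e1
      · -- a ∈ P₁, so a.1*c.1 ∈ gradRad P₁; and a.2*c.2 ∈ gradRad P₂ from c.2
        refine Or.inr (Or.inl (gradRad_prod_mem 𝒜₁ 𝒜₂ hmem ?_ ?_))
        · exact hom_mul_mem_gradRad 𝒜₁ ha1 hc1
            (hom_pow_mem_gradRad 𝒜₁ ha1 one_pos (by rwa [pow_one]))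
        · show a.2 * c.2 ∈ gradRad 𝒜₂ N₂.annihilator
          rw [mul_comm]
          exact hom_mul_mem_gradRad 𝒜₂ hc2 ha2 d2
      · -- b.1*c.1 ∈ gradRad P₁; and b.2*c.2 ∈ gradRad P₂ from c.2
        refine Or.inr (Or.inr (gradRad_prod_mem 𝒜₁ 𝒜₂ hmem e1 ?_))
        show b.2 * c.2 ∈ gradRad 𝒜₂ N₂.annihilator
        rw [mul_comm]
        exact hom_mul_mem_gradRad 𝒜₂ hc2 hb2 d2
    · -- symmetric: c.1 ∈ gradRad P₁, a.2*b.2 ∈ P₂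
      have e2 := hP₂.2.2 a.2 (b.2 * c.2) ⟨ga, ha2⟩ ⟨gb + gc, SetLike.mul_mem_graded hb2 hc2⟩
        (by rwa [← mul_assoc])
      rcases e2 with e2 | e2
      · refine Or.inr (Or.inl (gradRad_prod_mem 𝒜₁ 𝒜₂ hmem ?_ ?_))
        · show a.1 * c.1 ∈ gradRad 𝒜₁ N₁.annihilator
          rw [mul_comm]
          exact hom_mul_mem_gradRad 𝒜₁ hc1 ha1 d1
        · exact hom_mul_mem_gradRad 𝒜₂ ha2 hc2
            (hom_pow_mem_gradRad 𝒜₂ ha2 one_pos (by rwa [pow_one]))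
      · refine Or.inr (Or.inr (gradRad_prod_mem 𝒜₁ 𝒜₂ hmem ?_ e2))
        show b.1 * c.1 ∈ gradRad 𝒜₁ N₁.annihilator
        rw [mul_comm]
        exact hom_mul_mem_gradRad 𝒜₁ hc1 hb1 d1
    · -- both c components in gradRad
      refine Or.inr (Or.inl (gradRad_prod_mem 𝒜₁ 𝒜₂ hmem ?_ ?_))
      · show a.1 * c.1 ∈ gradRad 𝒜₁ N₁.annihilator
        rw [mul_comm]
        exact hom_mul_mem_gradRad 𝒜₁ hc1 ha1 d1
      · show a.2 * c.2 ∈ gradRad 𝒜₂ N₂.annihilator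
        rw [mul_comm]
        exact hom_mul_mem_gradRad 𝒜₂ hc2 ha2 d2
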